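/- Assume char k ≠ 2. For every z ∈ Z_ℓ and every ℓ×d matrix y over k there exist blocks x, y', w such that the block matrix [[z, y, x],[0, I_d, y'],[0, 0, w]] lies in V_ℓ. Equivalently, the projection map V_ℓ → Z_ℓ × Mat_{ℓ×d}(k) sending an element of V_ℓ to its pair of blocks (z, y) is surjective. -/

import Mathlib

open Matrix

noncomputable section

/-- Index type for the 3-block decomposition of size `ℓ + d + ℓ`. -/
abbrev Idx (ℓ d : ℕ) : Type := Fin ℓ ⊕ (Fin d ⊕ Fin ℓ)

variable {k : Type*} [Field k]

/-- The `n × n` matrix built out of nine blocks of sizes `ℓ, d, ℓ`. -/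
def blk3 {ℓ d : ℕ}
    (A : Matrix (Fin ℓ) (Fin ℓ) k) (B : Matrix (Fin ℓ) (Fin d) k) (C : Matrix (Fin ℓ) (Fin ℓ) k)
    (D : Matrix (Fin d) (Fin ℓ) k) (E : Matrix (Fin d) (Fin d) k) (F : Matrix (Fin d) (Fin ℓ) k)
    (G : Matrix (Fin ℓ) (Fin ℓ) k) (H : Matrix (Fin ℓ) (Fin d) k) (I : Matrix (Fin ℓ) (Fin ℓ) k) :
    Matrix (Idx ℓ d) (Idx ℓ d) k :=
  Matrix.fromBlocks A (Matrix.fromCols B C) (Matrix.fromRows D G) (Matrix.fromBlocks E F H I)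

/-- The `ℓ × ℓ` exchange matrix `K` (ones on the antidiagonal). -/
def exK (k : Type*) [Field k] (ℓ : ℕ) : Matrix (Fin ℓ) (Fin ℓ) k :=
  Matrix.of fun i j => if (i : ℕ) + (j : ℕ) = ℓ - 1 then 1 else 0

/-- The symmetric matrix `J = [[0,0,K],[0,J',0],[K,0,0]]`. -/
def Jmat {d : ℕ} (ℓ : ℕ) (J' : Matrix (Fin d) (Fin d) k) : Matrix (Idx ℓ d) (Idx ℓ d) k :=
  blk3 0 0 (exK k ℓ) 0 J' 0 (exK k ℓ) 0 0

/-- The special orthogonal group of an invertible symmetric matrix `S`: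
`SO(S) = {g : gᵀ S g = S, det g = 1}`. -/
def SO {m : Type*} [Fintype m] [DecidableEq m] (S : Matrix m m k) : Set (Matrix m m k) :=
  {g | gᵀ * S * g = S ∧ g.det = 1}

/-- Upper unitriangular matrices (the group `Z_ℓ`). -/
def IsUnitri {ℓ : ℕ} (z : Matrix (Fin ℓ) (Fin ℓ) k) : Prop :=
  (∀ i, z i i = 1) ∧ ∀ i j : Fin ℓ, (j : ℕ) < (i : ℕ) → z i j = 0

/-- The unipotent subgroup `V_ℓ ⊆ SO(J)`: elements of `SO(J)` of block form
`[[z, y, x], [0, I, y'], [0, 0, w]]` with `z` upper unitriangular. -/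
def Vl {d : ℕ} (ℓ : ℕ) (J' : Matrix (Fin d) (Fin d) k) :
    Set (Matrix (Idx ℓ d) (Idx ℓ d) k) :=
  {g | g ∈ SO (Jmat ℓ J') ∧ ∃ z y x y' w, IsUnitri z ∧ g = blk3 z y x 0 1 y' 0 0 w}

/-- The top-left `ℓ × ℓ` block `z` of a matrix. -/
def zBlk {ℓ d : ℕ} (g : Matrix (Idx ℓ d) (Idx ℓ d) k) : Matrix (Fin ℓ) (Fin ℓ) k :=
  Matrix.of fun i j => g (Sum.inl i) (Sum.inl j)

/-- The top-middle `ℓ × d` block `y` of a matrix. -/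
def yBlk {ℓ d : ℕ} (g : Matrix (Idx ℓ d) (Idx ℓ d) k) : Matrix (Fin ℓ) (Fin d) k :=
  Matrix.of fun i j => g (Sum.inl i) (Sum.inr (Sum.inl j))

/-- Sum of the superdiagonal entries `Σ_{i} z_{i, i+1}`. -/
def superdiag {ℓ : ℕ} (z : Matrix (Fin ℓ) (Fin ℓ) k) : k :=
  ∑ i : Fin ℓ, ∑ j : Fin ℓ, if (j : ℕ) = (i : ℕ) + 1 then z i j else 0

/-- The last row `y_ℓ` of an `ℓ × d` matrix (as a vector in `k^d`). -/
def lastRow {ℓ d : ℕ} (y : Matrix (Fin ℓ) (Fin d) k) : Fin d → k :=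
  fun j => ∑ i : Fin ℓ, if (i : ℕ) + 1 = ℓ then y i j else 0

/-- The Bessel character `χ_{w0}(g) = ψ(Σ_i z_{i,i+1} + y_ℓ J' w0)`. -/
def besselChar {ℓ d : ℕ} (ψ : AddChar k ℂˣ) (J' : Matrix (Fin d) (Fin d) k) (w0 : Fin d → k)
    (g : Matrix (Idx ℓ d) (Idx ℓ d) k) : ℂˣ :=
  ψ (superdiag (zBlk g) + lastRow (yBlk g) ⬝ᵥ J'.mulVec w0)

/-- The block-diagonal embedding `m : γ ↦ blockdiag(I_ℓ, γ, I_ℓ)`. -/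
def mEmb {d : ℕ} (ℓ : ℕ) (γ : Matrix (Fin d) (Fin d) k) : Matrix (Idx ℓ d) (Idx ℓ d) k :=
  blk3 1 0 0 0 γ 0 0 0 1

/-- The stabilizer `H_{w0} = {γ ∈ SO(J') : γ J' w0 = J' w0}`. -/
def Hstab {d : ℕ} (J' : Matrix (Fin d) (Fin d) k) (w0 : Fin d → k) :
    Set (Matrix (Fin d) (Fin d) k) :=
  {γ | γ ∈ SO J' ∧ γ.mulVec (J'.mulVec w0) = J'.mulVec w0}

/-- The Bessel subgroup `R_ℓ = {m(γ) v : γ ∈ H_{w0}, v ∈ V_ℓ}`. -/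
def Rl {d : ℕ} (ℓ : ℕ) (J' : Matrix (Fin d) (Fin d) k) (w0 : Fin d → k) :
    Set (Matrix (Idx ℓ d) (Idx ℓ d) k) :=
  {g | ∃ γ ∈ Hstab J' w0, ∃ v ∈ Vl ℓ J', g = mEmb ℓ γ * v}

/-- The superdiagonal of `z`, as a vector in `k^{ℓ-1}`. -/
def sdVec {ℓ : ℕ} (z : Matrix (Fin ℓ) (Fin ℓ) k) : Fin (ℓ - 1) → k :=
  fun i => z ⟨(i : ℕ), by have := i.isLt; omega⟩ ⟨(i : ℕ) + 1, by have := i.isLt; omega⟩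

/-- The projection of `V_ℓ` onto its abelianization `k^{ℓ-1} × k^d`,
`g ↦ ((z_{1,2}, …, z_{ℓ-1,ℓ}), y_ℓ)`. -/
def projVl {ℓ d : ℕ} (g : Matrix (Idx ℓ d) (Idx ℓ d) k) : (Fin (ℓ - 1) → k) × (Fin d → k) :=
  (sdVec (zBlk g), lastRow (yBlk g))


lemma blk3_mul {k : Type*} [Field k] {ℓ d : ℕ}
    (A B C D E F G H I : Matrix _ _ k) (A' B' C' D' E' F' G' H' I' : Matrix _ _ k) :
    blk3 (ℓ := ℓ) (d := d) A B C D E F G H I * blk3 A' B' C' D' E' F' G' H' I' =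
    blk3 (A*A' + B*D' + C*G') (A*B' + B*E' + C*H') (A*C' + B*F' + C*I')
         (D*A' + E*D' + F*G') (D*B' + E*E' + F*H') (D*C' + E*F' + F*I')
         (G*A' + H*D' + I*G') (G*B' + H*E' + I*H') (G*C' + H*F' + I*I') := by
  ext i j
  rcases i with i | i | i <;> rcases j with j | j | j <;>
    simp [blk3, Matrix.mul_apply, Fintype.sum_sum_type, Matrix.fromBlocks,
      Matrix.fromCols, Matrix.fromRows_apply_inl, Matrix.fromRows_apply_inr,
      Finset.sum_add_distrib, add_assoc]

lemma blk3_transpose {k : Type*} [Field k] {ℓ d : ℕ} (A B C D E F G H I : Matrix _ _ k) :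
    (blk3 (ℓ := ℓ) (d := d) A B C D E F G H I)ᵀ =
      blk3 Aᵀ Dᵀ Gᵀ Bᵀ Eᵀ Hᵀ Cᵀ Fᵀ Iᵀ := by
  ext i j
  rcases i with i | i | i <;> rcases j with j | j | j <;>
    simp [blk3, Matrix.fromBlocks, Matrix.fromCols, Matrix.fromRows_apply_inl,
      Matrix.fromRows_apply_inr]

lemma blk3_congr {k : Type*} [Field k] {ℓ d : ℕ}
    {A B C D E F G H I A' B' C' D' E' F' G' H' I' : Matrix _ _ k}
    (h1 : A = A') (h2 : B = B') (h3 : C = C') (h4 : D = D') (h5 : E = E') (h6 : F = F')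
    (h7 : G = G') (h8 : H = H') (h9 : I = I') :
    blk3 (ℓ := ℓ) (d := d) A B C D E F G H I = blk3 A' B' C' D' E' F' G' H' I' := by
  rw [h1, h2, h3, h4, h5, h6, h7, h8, h9]

lemma exK_eq {k : Type*} [Field k] (ℓ : ℕ) :
    exK k ℓ = (1 : Matrix (Fin ℓ) (Fin ℓ) k).submatrix id Fin.rev := by
  ext i j
  simp only [exK, Matrix.of_apply, Matrix.submatrix_apply, id_eq, Matrix.one_apply, Fin.ext_iff,
    Fin.val_rev]
  have := i.isLt; have := j.isLt
  by_cases h : (i : ℕ) + (j : ℕ) = ℓ - 1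
  · rw [if_pos h, if_pos (by omega)]
  · rw [if_neg h, if_neg (by omega)]

lemma exK_transpose {k : Type*} [Field k] (ℓ : ℕ) : (exK k ℓ)ᵀ = exK k ℓ := by
  ext i j
  simp [exK, Matrix.transpose_apply, add_comm]

lemma exK_mul_exK {k : Type*} [Field k] (ℓ : ℕ) : exK k ℓ * exK k ℓ = 1 := by
  have h2 : exK k ℓ = (1 : Matrix (Fin ℓ) (Fin ℓ) k).submatrix Fin.rev id := by
    rw [exK_eq]
    ext i j
    simp only [Matrix.submatrix_apply, id_eq, Matrix.one_apply, Fin.ext_iff, Fin.val_rev]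
    have := i.isLt; have := j.isLt
    by_cases h : (i : ℕ) = ℓ - (j : ℕ) - 1
    · rw [if_pos (by omega), if_pos (by omega)]
    · rw [if_neg (by omega), if_neg (by omega)]
  nth_rewrite 1 [exK_eq]
  rw [h2, show (Fin.rev : Fin ℓ → Fin ℓ) = ⇑(Fin.revPerm (n := ℓ)) from rfl,
    Matrix.submatrix_mul_equiv (1 : Matrix (Fin ℓ) (Fin ℓ) k) (1 : Matrix (Fin ℓ) (Fin ℓ) k) id
      Fin.revPerm id]
  simp

/-- if `char k ≠ 2`, every pair `(z, y)` with `z ∈ Z_ℓ` can be completed to an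
element of `V_ℓ`; equivalently, the projection `V_ℓ → Z_ℓ × Mat_{ℓ×d}(k)`, `g ↦ (z, y)`,
is surjective. -/
theorem Vl_proj_surjective {k : Type*} [Field k] {ℓ d : ℕ} (hl : 0 < ℓ) (hd : 0 < d)
    (hchar : ringChar k ≠ 2)
    (J' : Matrix (Fin d) (Fin d) k) (hJ'sym : J'ᵀ = J') (hJ'inv : IsUnit J') :
    ∀ (z : Matrix (Fin ℓ) (Fin ℓ) k), IsUnitri z → ∀ (y : Matrix (Fin ℓ) (Fin d) k),
      (∃ x y' w, blk3 z y x 0 1 y' 0 0 w ∈ Vl ℓ J') ∧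
      (∃ g ∈ Vl ℓ J', zBlk g = z ∧ yBlk g = y) := by
  intro z hz y
  classical
  set K : Matrix (Fin ℓ) (Fin ℓ) k := exK k ℓ with hKdef
  have hKK : K * K = 1 := exK_mul_exK ℓ
  have hKT : Kᵀ = K := exK_transpose ℓ
  have hdetz : z.det = 1 := by
    rw [Matrix.det_of_upperTriangular (fun i j h => hz.2 i j h)]
    simp [hz.1]
  have hzTu : IsUnit zᵀ.det := by rw [Matrix.det_transpose, hdetz]; exact isUnit_one
  have hJd : IsUnit J'.det := (Matrix.isUnit_iff_isUnit_det J').mp hJ'inv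
  have h2 : (2 : k) ≠ 0 := Ring.two_ne_zero hchar
  set w : Matrix (Fin ℓ) (Fin ℓ) k := K * zᵀ⁻¹ * K with hw
  set y' : Matrix (Fin d) (Fin ℓ) k := -(J'⁻¹ * (yᵀ * (K * w))) with hy'
  set S : Matrix (Fin ℓ) (Fin ℓ) k := y'ᵀ * (J' * y') with hS
  set c : k := -(2 : k)⁻¹ with hc
  set x : Matrix (Fin ℓ) (Fin ℓ) k := K * wᵀ⁻¹ * (c • S) with hx
  have hdetKK : K.det * K.det = 1 := by rw [← Matrix.det_mul, hKK, Matrix.det_one]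
  have hdetw : w.det = 1 := by
    rw [hw, Matrix.det_mul, Matrix.det_mul, Matrix.det_nonsing_inv, Matrix.det_transpose, hdetz,
      Ring.inverse_one, mul_one, hdetKK]
  have hwTu : IsUnit wᵀ.det := by rw [Matrix.det_transpose, hdetw]; exact isUnit_one
  have f1 : zᵀ * (K * w) = K := by
    rw [hw]
    simp only [Matrix.mul_assoc]
    rw [← Matrix.mul_assoc K K, hKK, Matrix.one_mul, ← Matrix.mul_assoc zᵀ,
      Matrix.mul_nonsing_inv _ hzTu, Matrix.one_mul]
  have f1' : wᵀ * (K * z) = K := by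
    have h := congrArg Matrix.transpose f1
    simp only [Matrix.transpose_mul, Matrix.transpose_transpose, hKT, Matrix.mul_assoc] at h
    exact h
  have f2 : J' * y' = -(yᵀ * (K * w)) := by
    rw [hy', Matrix.mul_neg, ← Matrix.mul_assoc, Matrix.mul_nonsing_inv _ hJd, Matrix.one_mul]
  have f2' : y'ᵀ * J' = -(wᵀ * (K * y)) := by
    rw [hy']
    simp only [Matrix.transpose_neg, Matrix.transpose_mul, Matrix.transpose_transpose,
      Matrix.transpose_nonsing_inv, hJ'sym, hKT, Matrix.neg_mul, Matrix.mul_assoc,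
      Matrix.nonsing_inv_mul _ hJd, Matrix.mul_one]
  have hSsym : Sᵀ = S := by
    rw [hS, Matrix.transpose_mul, Matrix.transpose_mul, Matrix.transpose_transpose, hJ'sym,
      Matrix.mul_assoc]
  have f3 : wᵀ * (K * x) = c • S := by
    rw [hx]
    simp only [Matrix.mul_assoc]
    rw [← Matrix.mul_assoc K K, hKK, Matrix.one_mul, ← Matrix.mul_assoc wᵀ,
      Matrix.mul_nonsing_inv _ hwTu, Matrix.one_mul]
  have f3' : xᵀ * (K * w) = c • S := by
    have h := congrArg Matrix.transpose f3
    simp only [Matrix.transpose_mul, Matrix.transpose_transpose, hKT, Matrix.transpose_smul,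
      hSsym, Matrix.mul_assoc] at h
    exact h
  have hcc : c + c + 1 = 0 := by
    rw [hc]
    field_simp
    ring
  have f4 : c • S + S + c • S = 0 := by
    have h : c • S + S + c • S = (c + c + 1) • S := by module
    rw [h, hcc, zero_smul]
  have hSO : blk3 z y x 0 1 y' 0 0 w ∈ SO (Jmat ℓ J') := by
    constructor
    · rw [Jmat, ← hKdef, blk3_transpose, blk3_mul, blk3_mul]
      simp only [Matrix.mul_zero, Matrix.zero_mul, Matrix.mul_one, Matrix.one_mul,
        Matrix.transpose_zero, Matrix.transpose_one, add_zero, zero_add, Matrix.mul_assoc]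
      exact blk3_congr rfl rfl f1 rfl rfl (by rw [f2]; abel) f1' (by rw [f2']; abel)
        (by rw [f3, f3', ← hS]; exact f4)
    · show (Matrix.fromBlocks z (Matrix.fromCols y x) (Matrix.fromRows 0 0)
        (Matrix.fromBlocks 1 y' 0 w)).det = 1
      rw [Matrix.fromRows_zero, Matrix.det_fromBlocks_zero₂₁, Matrix.det_fromBlocks_zero₂₁,
        Matrix.det_one, hdetz, one_mul, one_mul, hdetw]
  refine ⟨⟨x, y', w, hSO, z, y, x, y', w, hz, rfl⟩, ⟨blk3 z y x 0 1 y' 0 0 w,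
    ⟨hSO, z, y, x, y', w, hz, rfl⟩, ?_, ?_⟩⟩
  · ext i j
    simp [zBlk, blk3]
  · ext i j
    simp [yBlk, blk3]
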